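/- Let N ≥ 1 and let H_i : ℝ^d × ℝ → ℝ (i = 1,…,N) be C² with everywhere positive definite Hessian and superlinear; let π_i^0(p') be the unique minimizer of p ↦ H_i(p',p), A_i(p') = H_i(p', π_i^0(p')), A_0 = max_i A_i, and for λ ≥ A_i(p') let π_i^+(p',λ) be the unique p ≥ π_i^0(p') with H_i(p',p) = λ. Let F : ℝ^d × ℝ^N → ℝ be convex and nonincreasing in each of its last N variables. Then the function G(p',λ) := F(p', (π_1^+(p',λ),…,π_N^+(p',λ))) is convex on the convex set epi A_0 = {(p',λ) : λ ≥ A_0(p')}, and for each fixed p' the map λ ↦ G(p',λ) is nonincreasing on [A_0(p'), +∞). -/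

import Mathlib

lemma convexOn_of_iteratedFDeriv_two_nonneg {E : Type*} [NormedAddCommGroup E] [NormedSpace ℝ E]
    (f : E → ℝ) (hf : ContDiff ℝ 2 f)
    (hpos : ∀ P v, 0 ≤ iteratedFDeriv ℝ 2 f P ![v, v]) :
    ConvexOn ℝ Set.univ f := by
  refine ⟨convex_univ, fun x _ y _ a b ha hb hab => ?_⟩
  set v := y - x with hv
  set g : ℝ → ℝ := fun t => f (x + t • v) with hgdef
  have hL : ∀ t : ℝ, HasDerivAt (fun s : ℝ => x + s • v) v t := fun t => by
    simpa using ((hasDerivAt_id t).smul_const v).const_add x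
  have hf1 : Differentiable ℝ f := hf.differentiable (by norm_num)
  have hf'c : ContDiff ℝ 1 (fderiv ℝ f) := hf.fderiv_right (by norm_num)
  have hf'd : Differentiable ℝ (fderiv ℝ f) := hf'c.differentiable (by norm_num)
  have hg' : ∀ t : ℝ, HasDerivAt g (fderiv ℝ f (x + t • v) v) t := fun t =>
    (hf1 _).hasFDerivAt.comp_hasDerivAt t (hL t)
  have hdg : deriv g = fun t => fderiv ℝ f (x + t • v) v := funext fun t => (hg' t).deriv
  have hφ : ∀ z : E, HasFDerivAt (fun y => fderiv ℝ f y v)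
      ((ContinuousLinearMap.apply ℝ ℝ v).comp (fderiv ℝ (fderiv ℝ f) z)) z := fun z =>
    (ContinuousLinearMap.apply ℝ ℝ v).hasFDerivAt.comp z (hf'd z).hasFDerivAt
  have hg'' : ∀ t : ℝ, HasDerivAt (deriv g)
      (fderiv ℝ (fderiv ℝ f) (x + t • v) v v) t := fun t => by
    rw [hdg]
    exact (hφ (x + t • v)).comp_hasDerivAt t (hL t)
  have h2 : ∀ t : ℝ, 0 ≤ deriv^[2] g t := fun t => by
    have := (hg'' t).deriv
    simp only [Function.iterate_succ, Function.iterate_zero, Function.comp_apply, id_eq]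
    rw [this]
    have h := hpos (x + t • v) v
    rwa [iteratedFDeriv_two_apply] at h
  have hgconv : ConvexOn ℝ Set.univ g :=
    convexOn_univ_of_deriv2_nonneg (fun t => (hg' t).differentiableAt)
      (fun t => (hg'' t).differentiableAt) h2
  have h01 := hgconv.2 (Set.mem_univ (0:ℝ)) (Set.mem_univ (1:ℝ)) ha hb hab
  have hg0 : g 0 = f x := by simp [hgdef]
  have hg1 : g 1 = f y := by
    have hxy : x + (1:ℝ) • v = y := by rw [hv]; module
    simp only [hgdef]; rw [hxy]
  have hgb : g (a • (0:ℝ) + b • 1) = f (a • x + b • y) := by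
    have hba : a = 1 - b := by linarith
    have : x + (a • (0:ℝ) + b • (1:ℝ)) • v = a • x + b • y := by
      simp only [smul_zero, smul_eq_mul, mul_one, zero_add]
      rw [hv, hba]; module
    simp only [hgdef]; rw [this]
  rw [← hgb]
  calc g (a • (0:ℝ) + b • 1) ≤ a • g 0 + b • g 1 := h01
  _ = a • f x + b • f y := by rw [hg0, hg1]

/-- With `H i : ℝ^d × ℝ → ℝ` C², positive definite Hessian, superlinear,
`π0 i p'` the unique minimizer of `p ↦ H i (p', p)`, `A0 = max_i H i (p', π0 i p')`,
`πp i p' λ` the unique `p ≥ π0 i p'` with `H i (p', p) = λ` (for `λ ≥ A_i p'`), and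
`F` convex and nonincreasing in each of its last `N` variables, the function
`G (p', λ) := F (p', (πp i p' λ)_i)` is convex on the epigraph of `A0` and,
for fixed `p'`, nonincreasing in `λ` on `[A0 p', +∞)`. -/
theorem G_convex_and_nonincreasing (d N : ℕ) (hN : 1 ≤ N)
    (H : Fin N → EuclideanSpace ℝ (Fin d) × ℝ → ℝ)
    (hC2 : ∀ i, ContDiff ℝ 2 (H i))
    (hposdef : ∀ i (P v : EuclideanSpace ℝ (Fin d) × ℝ), v ≠ 0 →
      0 < iteratedFDeriv ℝ 2 (H i) P ![v, v])
    (hsuper : ∀ i, ∀ M : ℝ, ∃ R : ℝ, ∀ P : EuclideanSpace ℝ (Fin d) × ℝ,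
      R ≤ ‖P‖ → M * ‖P‖ ≤ H i P)
    (π0 : Fin N → EuclideanSpace ℝ (Fin d) → ℝ)
    (hπ0 : ∀ i p', (∀ q : ℝ, H i (p', π0 i p') ≤ H i (p', q)) ∧
      ∀ p : ℝ, (∀ q : ℝ, H i (p', p) ≤ H i (p', q)) → p = π0 i p')
    (A0 : EuclideanSpace ℝ (Fin d) → ℝ)
    (hA0 : ∀ p', IsGreatest (Set.range fun i => H i (p', π0 i p')) (A0 p'))
    (πp : Fin N → EuclideanSpace ℝ (Fin d) → ℝ → ℝ)
    (hπp : ∀ i (p' : EuclideanSpace ℝ (Fin d)) (lam : ℝ), H i (p', π0 i p') ≤ lam →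
      π0 i p' ≤ πp i p' lam ∧ H i (p', πp i p' lam) = lam ∧
      ∀ p : ℝ, π0 i p' ≤ p → H i (p', p) = lam → p = πp i p' lam)
    (F : EuclideanSpace ℝ (Fin d) × (Fin N → ℝ) → ℝ)
    (hFconv : ConvexOn ℝ Set.univ F)
    (hFmono : ∀ (p' : EuclideanSpace ℝ (Fin d)) (q : Fin N → ℝ) (i : Fin N) (a b : ℝ),
      a ≤ b → F (p', Function.update q i b) ≤ F (p', Function.update q i a)) :
    ConvexOn ℝ {q : EuclideanSpace ℝ (Fin d) × ℝ | A0 q.1 ≤ q.2}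
      (fun q => F (q.1, fun i => πp i q.1 q.2)) ∧
    ∀ (p' : EuclideanSpace ℝ (Fin d)) (lam mu : ℝ), A0 p' ≤ lam → lam ≤ mu →
      F (p', fun i => πp i p' mu) ≤ F (p', fun i => πp i p' lam) := by
  classical
  -- convexity of each H i
  have hHconv : ∀ i, ConvexOn ℝ Set.univ (H i) := by
    intro i
    refine convexOn_of_iteratedFDeriv_two_nonneg (H i) (hC2 i) (fun P v => ?_)
    rcases eq_or_ne v 0 with rfl | hv
    · have h0 : iteratedFDeriv ℝ 2 (H i) P ![0, 0] = 0 :=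
        (iteratedFDeriv ℝ 2 (H i) P).map_coord_zero 0 (by simp)
      rw [h0]
    · exact (hposdef i P v hv).le
  have hcont : ∀ i, Continuous (H i) := fun i => (hC2 i).continuous
  have hAle : ∀ i x, H i (x, π0 i x) ≤ A0 x := fun i x => (hA0 x).2 ⟨i, rfl⟩
  -- key sub-level bound
  have key : ∀ i (x : EuclideanSpace ℝ (Fin d)) (lam : ℝ), H i (x, π0 i x) ≤ lam →
      ∀ p : ℝ, H i (x, p) ≤ lam → p ≤ πp i x lam := by
    intro i x lam hlam p hp
    obtain ⟨h1, h2, h3⟩ := hπp i x lam hlam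
    by_contra hlt
    push_neg at hlt
    have hπ0p : π0 i x ≤ p := le_trans h1 hlt.le
    obtain ⟨R, hR⟩ := hsuper i 1
    set q : ℝ := max (max p R) (max lam 0) with hq
    have hpq : p ≤ q := le_max_of_le_left (le_max_left _ _)
    have hq0 : 0 ≤ q := le_max_of_le_right (le_max_right _ _)
    have hqR : R ≤ q := le_max_of_le_left (le_max_right _ _)
    have hnq : q ≤ ‖((x, q) : EuclideanSpace ℝ (Fin d) × ℝ)‖ := by
      calc q = ‖q‖ := (Real.norm_of_nonneg hq0).symm
      _ ≤ ‖((x, q) : EuclideanSpace ℝ (Fin d) × ℝ)‖ := norm_snd_le (x, q)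
    have hHq : lam ≤ H i (x, q) := by
      have h := hR (x, q) (le_trans hqR hnq)
      rw [one_mul] at h
      have hlq : lam ≤ q := le_max_of_le_right (le_max_left _ _)
      linarith
    have hcont' : ContinuousOn (fun r : ℝ => H i (x, r)) (Set.Icc p q) :=
      ((hcont i).comp (continuous_const.prodMk continuous_id)).continuousOn
    obtain ⟨r, hrmem, hr⟩ := intermediate_value_Icc hpq hcont' ⟨hp, hHq⟩
    have hre : r = πp i x lam := h3 r (le_trans hπ0p hrmem.1) hr
    have hcontra : πp i x lam < r := lt_of_lt_of_le hlt hrmem.1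
    rw [hre] at hcontra
    exact lt_irrefl _ hcontra
  -- F monotone pointwise
  have Fmono : ∀ (p' : EuclideanSpace ℝ (Fin d)) (u q : Fin N → ℝ),
      (∀ i, u i ≤ q i) → F (p', q) ≤ F (p', u) := by
    intro p' u q huq
    have step : ∀ s : Finset (Fin N),
        F (p', fun i => if i ∈ s then q i else u i) ≤ F (p', u) := by
      intro s
      induction s using Finset.induction_on with
      | empty => simp
      | @insert j s hj ih =>
        have e1 : (fun i => if i ∈ insert j s then q i else u i)
            = Function.update (fun i => if i ∈ s then q i else u i) j (q j) := by
          funext i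
          by_cases h : i = j
          · subst h; simp [hj]
          · simp [Function.update_of_ne h, Finset.mem_insert, h]
        have e2 : (fun i => if i ∈ s then q i else u i)
            = Function.update (fun i => if i ∈ s then q i else u i) j (u j) := by
          funext i
          by_cases h : i = j
          · subst h; simp [hj]
          · simp [Function.update_of_ne h]
        calc F (p', fun i => if i ∈ insert j s then q i else u i)
            = F (p', Function.update (fun i => if i ∈ s then q i else u i) j (q j)) := by
              rw [e1]
          _ ≤ F (p', Function.update (fun i => if i ∈ s then q i else u i) j (u j)) :=
              hFmono p' _ j (u j) (q j) (huq j)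
          _ = F (p', fun i => if i ∈ s then q i else u i) := by rw [← e2]
          _ ≤ F (p', u) := ih
    have := step Finset.univ
    simpa using this
  -- A_i at convex combination
  have hAcomb : ∀ i (x1 x2 : EuclideanSpace ℝ (Fin d)) (a b : ℝ), 0 ≤ a → 0 ≤ b → a + b = 1 →
      H i (a • x1 + b • x2, π0 i (a • x1 + b • x2)) ≤
        a * H i (x1, π0 i x1) + b * H i (x2, π0 i x2) := by
    intro i x1 x2 a b ha hb hab
    have hmin := (hπ0 i (a • x1 + b • x2)).1 (a * π0 i x1 + b * π0 i x2)
    have hc := (hHconv i).2 (Set.mem_univ ((x1, π0 i x1) : EuclideanSpace ℝ (Fin d) × ℝ))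
      (Set.mem_univ ((x2, π0 i x2) : EuclideanSpace ℝ (Fin d) × ℝ)) ha hb hab
    simp only [Prod.smul_mk, Prod.mk_add_mk, smul_eq_mul] at hc
    exact le_trans hmin hc
  refine ⟨⟨?_, ?_⟩, ?_⟩
  · -- convexity of the epigraph set
    rintro ⟨x1, l1⟩ hP ⟨x2, l2⟩ hQ a b ha hb hab
    simp only [Set.mem_setOf_eq] at hP hQ ⊢
    simp only [Prod.smul_mk, Prod.mk_add_mk, smul_eq_mul]
    obtain ⟨i0, hi0⟩ := (hA0 (a • x1 + b • x2)).1
    have h1 := hAcomb i0 x1 x2 a b ha hb hab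
    have h2 : a * H i0 (x1, π0 i0 x1) ≤ a * l1 :=
      mul_le_mul_of_nonneg_left (le_trans (hAle i0 x1) hP) ha
    have h3 : b * H i0 (x2, π0 i0 x2) ≤ b * l2 :=
      mul_le_mul_of_nonneg_left (le_trans (hAle i0 x2) hQ) hb
    calc A0 (a • x1 + b • x2) = H i0 (a • x1 + b • x2, π0 i0 (a • x1 + b • x2)) := hi0.symm
      _ ≤ a * H i0 (x1, π0 i0 x1) + b * H i0 (x2, π0 i0 x2) := h1
      _ ≤ a * l1 + b * l2 := add_le_add h2 h3
  · -- convexity inequality for G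
    rintro ⟨x1, l1⟩ hP ⟨x2, l2⟩ hQ a b ha hb hab
    simp only [Set.mem_setOf_eq] at hP hQ
    have hl1 : ∀ i, H i (x1, π0 i x1) ≤ l1 := fun i => le_trans (hAle i x1) hP
    have hl2 : ∀ i, H i (x2, π0 i x2) ≤ l2 := fun i => le_trans (hAle i x2) hQ
    have hlt : ∀ i, H i (a • x1 + b • x2, π0 i (a • x1 + b • x2)) ≤ a * l1 + b * l2 := by
      intro i
      refine le_trans (hAcomb i x1 x2 a b ha hb hab) (add_le_add ?_ ?_)
      · exact mul_le_mul_of_nonneg_left (hl1 i) ha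
      · exact mul_le_mul_of_nonneg_left (hl2 i) hb
    have hcomb : ∀ i, a * πp i x1 l1 + b * πp i x2 l2 ≤
        πp i (a • x1 + b • x2) (a * l1 + b * l2) := by
      intro i
      apply key i (a • x1 + b • x2) (a * l1 + b * l2) (hlt i)
      have hc := (hHconv i).2
        (Set.mem_univ ((x1, πp i x1 l1) : EuclideanSpace ℝ (Fin d) × ℝ))
        (Set.mem_univ ((x2, πp i x2 l2) : EuclideanSpace ℝ (Fin d) × ℝ)) ha hb hab
      simp only [Prod.smul_mk, Prod.mk_add_mk, smul_eq_mul] at hc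
      rw [(hπp i x1 l1 (hl1 i)).2.1, (hπp i x2 l2 (hl2 i)).2.1] at hc
      exact hc
    have hsm : a • ((x1, l1) : EuclideanSpace ℝ (Fin d) × ℝ) + b • (x2, l2)
        = (a • x1 + b • x2, a * l1 + b * l2) := by
      simp [Prod.smul_mk, Prod.mk_add_mk, smul_eq_mul]
    have hFc := hFconv.2
      (Set.mem_univ ((x1, fun i => πp i x1 l1) : EuclideanSpace ℝ (Fin d) × (Fin N → ℝ)))
      (Set.mem_univ ((x2, fun i => πp i x2 l2) : EuclideanSpace ℝ (Fin d) × (Fin N → ℝ)))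
      ha hb hab
    have hsm2 : a • ((x1, fun i => πp i x1 l1) : EuclideanSpace ℝ (Fin d) × (Fin N → ℝ))
        + b • (x2, fun i => πp i x2 l2)
        = (a • x1 + b • x2, fun i => a * πp i x1 l1 + b * πp i x2 l2) := by
      simp only [Prod.smul_mk, Prod.mk_add_mk]
      refine Prod.ext rfl ?_
      funext i
      simp [smul_eq_mul]
    rw [hsm2] at hFc
    calc (fun q => F (q.1, fun i => πp i q.1 q.2)) (a • ((x1, l1) : _ × ℝ) + b • (x2, l2))
        = F (a • x1 + b • x2, fun i => πp i (a • x1 + b • x2) (a * l1 + b * l2)) := by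
          rw [hsm]
      _ ≤ F (a • x1 + b • x2, fun i => a * πp i x1 l1 + b * πp i x2 l2) :=
          Fmono _ _ _ hcomb
      _ ≤ a • F (x1, fun i => πp i x1 l1) + b • F (x2, fun i => πp i x2 l2) := hFc
      _ = a • (fun q : EuclideanSpace ℝ (Fin d) × ℝ => F (q.1, fun i => πp i q.1 q.2)) (x1, l1)
          + b • (fun q : EuclideanSpace ℝ (Fin d) × ℝ => F (q.1, fun i => πp i q.1 q.2)) (x2, l2) := rfl
  · -- monotonicity in λ
    intro p' lam mu hlam hmu
    refine Fmono p' _ _ (fun i => ?_)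
    have hAi : H i (p', π0 i p') ≤ lam := le_trans (hAle i p') hlam
    exact key i p' mu (le_trans hAi hmu) (πp i p' lam)
      (by rw [(hπp i p' lam hAi).2.1]; exact hmu)
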